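/- Let (p_k)_{k≥1} be nonnegative with Σ_k p_k = 1, let n > 0 and t, τ ∈ [0,1] with t + τ > 1. Let ((X_k, Y_k, Z_k))_{k≥1} be mutually independent triples of independent Poisson random variables, with X_k of mean p_k(1−τ)n, Y_k of mean p_k(t+τ−1)n, and Z_k of mean p_k(1−t)n. Set R = Σ_k 1(X_k + Y_k ≥ 1) and R' = Σ_k 1(Y_k + Z_k ≥ 1) (both sums converge a.s. and in L²). Then Cov(R, R') = Σ_k (e^{−p_k n} − e^{−p_k(t+τ)n}) = Φ((t+τ)n) − Φ(n), where Φ(x) = Σ_k (1 − e^{−p_k x}). -/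

import Mathlib

open MeasureTheory ProbabilityTheory Filter Real
open scoped NNReal

noncomputable section

open scoped ENNReal

lemma aux_ofReal_exp_mul (a b : ℝ) :
    ENNReal.ofReal (rexp (-a)) * ENNReal.ofReal (rexp (-b)) = ENNReal.ofReal (rexp (-(a+b))) := by
  rw [← ENNReal.ofReal_mul (exp_nonneg _), ← Real.exp_add, neg_add]

lemma aux_one_sub_exp_nonneg {x : ℝ} (hx : 0 ≤ x) : 0 ≤ 1 - rexp (-x) := by
  have : rexp (-x) ≤ rexp 0 := Real.exp_le_exp.mpr (by linarith)
  simpa [Real.exp_zero] using this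

lemma aux_one_sub_exp_le (x : ℝ) : 1 - rexp (-x) ≤ x := by
  have := Real.add_one_le_exp (-x); linarith

lemma aux_inclexcl {Ω : Type*} [MeasurableSpace Ω] (P : Measure Ω) [IsProbabilityMeasure P]
    {A B : Set Ω} (hA : MeasurableSet A) (hB : MeasurableSet B) :
    (P (Aᶜ ∩ Bᶜ)).toReal = 1 - (P A).toReal - (P B).toReal + (P (A ∩ B)).toReal := by
  have hU : P (A ∪ B) + P (A ∩ B) = P A + P B := measure_union_add_inter A hB
  have h2 : P (Aᶜ ∩ Bᶜ) = 1 - P (A ∪ B) := by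
    rw [← Set.compl_union, measure_compl (hA.union hB) (measure_ne_top _ _), measure_univ]
  have e1 : (P (A ∪ B)).toReal + (P (A ∩ B)).toReal = (P A).toReal + (P B).toReal := by
    rw [← ENNReal.toReal_add (measure_ne_top _ _) (measure_ne_top _ _),
      ← ENNReal.toReal_add (measure_ne_top _ _) (measure_ne_top _ _), hU]
  have e2 : (P (Aᶜ ∩ Bᶜ)).toReal = 1 - (P (A ∪ B)).toReal := by
    rw [h2, ENNReal.toReal_sub_of_le prob_le_one ENNReal.one_ne_top, ENNReal.toReal_one]
  linarith

lemma aux_inclexcl' {Ω : Type*} [MeasurableSpace Ω] (P : Measure Ω) [IsProbabilityMeasure P]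
    {A B : Set Ω} (hA : MeasurableSet A) (hB : MeasurableSet B) {a b z : ℝ}
    (hPA : P A = ENNReal.ofReal a) (hPB : P B = ENNReal.ofReal b)
    (hPAB : P (A ∩ B) = ENNReal.ofReal z)
    (ha0 : 0 ≤ a) (hb0 : 0 ≤ b) (hz0 : 0 ≤ z) :
    P (Aᶜ ∩ Bᶜ) = ENNReal.ofReal (1 - a - b + z) := by
  have h := aux_inclexcl P hA hB
  rw [hPA, hPB, hPAB, ENNReal.toReal_ofReal ha0, ENNReal.toReal_ofReal hb0,
    ENNReal.toReal_ofReal hz0] at h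
  rw [← ENNReal.ofReal_toReal (measure_ne_top P (Aᶜ ∩ Bᶜ)), h]

lemma aux_map_zero {Ω : Type*} [MeasurableSpace Ω] (P : Measure Ω) [IsProbabilityMeasure P]
    {V : Ω → ℕ} (hm : Measurable V) {x : ℝ} (hx : 0 ≤ x)
    (h : P.map V = poissonMeasure (Real.toNNReal x)) :
    P (V ⁻¹' {0}) = ENNReal.ofReal (rexp (-x)) := by
  have : P (V ⁻¹' {0}) = (P.map V) {0} := (Measure.map_apply hm (measurableSet_singleton 0)).symm
  rw [this, h, poissonMeasure_singleton]
  simp [Real.coe_toNNReal x hx]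

lemma aux_ite_summable {d : ℝ} (j : ℕ) : Summable (fun k : ℕ => if j = k then d else 0) := by
  apply summable_of_ne_finset_zero (s := {j})
  intro k hk
  simp only [Finset.mem_singleton] at hk
  exact if_neg (fun h => hk h.symm)

lemma aux_ite_tsum {d : ℝ} (j : ℕ) : (∑' k : ℕ, if j = k then d else 0) = d := by
  have : (fun k : ℕ => if j = k then d else 0) = fun k => if k = j then d else 0 := by
    ext k; by_cases h : j = k
    · simp [h]
    · rw [if_neg h, if_neg (fun h' : k = j => h h'.symm)]
  rw [this, tsum_ite_eq]

lemma aux_double {u v w : ℕ → ℝ} (hu : ∀ k, 0 ≤ u k) (hv : ∀ k, 0 ≤ v k) (hw : ∀ k, 0 ≤ w k)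
    (hsu : Summable u) (hsv : Summable v) (hsw : Summable w) :
    (∑' j, ∑' k : ℕ, ENNReal.ofReal (u j * v k + if j = k then w j else 0))
      = ENNReal.ofReal ((∑' j, u j) * (∑' k, v k) + ∑' j, w j) := by
  have hnn : ∀ j k : ℕ, 0 ≤ u j * v k + if j = k then w j else 0 := by
    intro j k
    have h1 : (0:ℝ) ≤ if j = k then w j else 0 := by
      split
      · exact hw j
      · exact le_refl 0
    have h2 := mul_nonneg (hu j) (hv k); linarith
  have hinner : ∀ j, (∑' k : ℕ, ENNReal.ofReal (u j * v k + if j = k then w j else 0))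
      = ENNReal.ofReal (u j * (∑' k, v k) + w j) := by
    intro j
    rw [← ENNReal.ofReal_tsum_of_nonneg (hnn j)
      (((hsv.mul_left (u j))).add (aux_ite_summable j))]
    congr 1
    rw [Summable.tsum_add (hsv.mul_left (u j)) (aux_ite_summable j), tsum_mul_left, aux_ite_tsum]
  rw [tsum_congr hinner,
    ← ENNReal.ofReal_tsum_of_nonneg
      (fun j => add_nonneg (mul_nonneg (hu j) (tsum_nonneg hv : 0 ≤ ∑' k, v k)) (hw j))
      ((hsu.mul_right _).add hsw)]
  congr 1
  rw [Summable.tsum_add (hsu.mul_right _) hsw, tsum_mul_right]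

lemma aux_lintegral_prod_indicator {Ω : Type*} [MeasurableSpace Ω] (P : Measure Ω)
    {S T : ℕ → Set Ω} (hS : ∀ k, MeasurableSet (S k)) (hT : ∀ k, MeasurableSet (T k)) :
    ∫⁻ ω, (∑' j, (S j).indicator 1 ω) * (∑' k, (T k).indicator 1 ω) ∂P
      = ∑' j, ∑' k, P (S j ∩ T k) := by
  have hpt : ∀ ω, (∑' j, (S j).indicator 1 ω) * (∑' k, (T k).indicator 1 ω)
      = ∑' j, ∑' k, ((S j ∩ T k).indicator (1 : Ω → ℝ≥0∞) ω) := by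
    intro ω
    rw [← ENNReal.tsum_mul_right]
    refine tsum_congr fun j => ?_
    rw [← ENNReal.tsum_mul_left]
    refine tsum_congr fun k => ?_
    rw [Set.inter_indicator_one]
    rfl
  rw [lintegral_congr hpt,
    lintegral_tsum (fun j => (Measurable.ennreal_tsum fun k =>
      measurable_one.indicator ((hS j).inter (hT k))).aemeasurable)]
  refine tsum_congr fun j => ?_
  rw [lintegral_tsum (fun k => (measurable_one.indicator ((hS j).inter (hT k))).aemeasurable)]
  exact tsum_congr fun k => lintegral_indicator_one ((hS j).inter (hT k))

lemma aux_ind_ne_top {Ω : Type*} (S : Set Ω) (ω : Ω) : (S.indicator (1 : Ω → ℝ≥0∞) ω) ≠ ⊤ := by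
  classical
  rw [Set.indicator_apply]; split <;> simp

lemma aux_lintegral_single {Ω : Type*} [MeasurableSpace Ω] (P : Measure Ω) [IsProbabilityMeasure P]
    {S : ℕ → Set Ω} (hS : ∀ k, MeasurableSet (S k)) {a : ℕ → ℝ}
    (hPS : ∀ k, P (S k) = ENNReal.ofReal (a k)) (ha0 : ∀ k, 0 ≤ a k) (hsa : Summable a) :
    ∫⁻ ω, (∑' k, (S k).indicator 1 ω) ∂P = ENNReal.ofReal (∑' k, a k) := by
  rw [lintegral_tsum (fun k => (measurable_one.indicator (hS k)).aemeasurable)]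
  rw [tsum_congr (fun k => (lintegral_indicator_one (hS k)).trans (hPS k))]
  exact (ENNReal.ofReal_tsum_of_nonneg ha0 hsa).symm

lemma aux_ae_summable {Ω : Type*} [MeasurableSpace Ω] (P : Measure Ω) [IsProbabilityMeasure P]
    {S : ℕ → Set Ω} (hS : ∀ k, MeasurableSet (S k)) {a : ℕ → ℝ}
    (hPS : ∀ k, P (S k) = ENNReal.ofReal (a k)) (ha0 : ∀ k, 0 ≤ a k) (hsa : Summable a) :
    ∀ᵐ ω ∂P, Summable fun k => ((S k).indicator (1 : Ω → ℝ≥0∞) ω).toReal := by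
  have hmF : Measurable fun ω => ∑' k, (S k).indicator (1 : Ω → ℝ≥0∞) ω :=
    Measurable.ennreal_tsum fun k => measurable_one.indicator (hS k)
  filter_upwards [ae_lt_top hmF (by
    rw [aux_lintegral_single P hS hPS ha0 hsa]; exact ENNReal.ofReal_ne_top)] with ω hω
  exact ENNReal.summable_toReal hω.ne

lemma aux_integral_single {Ω : Type*} [MeasurableSpace Ω] (P : Measure Ω) [IsProbabilityMeasure P]
    {S : ℕ → Set Ω} (hS : ∀ k, MeasurableSet (S k)) {a : ℕ → ℝ}
    (hPS : ∀ k, P (S k) = ENNReal.ofReal (a k)) (ha0 : ∀ k, 0 ≤ a k) (hsa : Summable a)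
    {R : Ω → ℝ} (hR : ∀ ω, R ω = (∑' k, (S k).indicator (1 : Ω → ℝ≥0∞) ω).toReal) :
    ∫ ω, R ω ∂P = ∑' k, a k := by
  have hmF : Measurable fun ω => ∑' k, (S k).indicator (1 : Ω → ℝ≥0∞) ω :=
    Measurable.ennreal_tsum fun k => measurable_one.indicator (hS k)
  have h1 : ∫ ω, R ω ∂P = (∫⁻ ω, (∑' k, (S k).indicator 1 ω) ∂P).toReal := by
    rw [integral_congr_ae (Filter.EventuallyEq.of_eq (funext hR))]
    exact integral_toReal hmF.aemeasurable
      (ae_lt_top hmF (by rw [aux_lintegral_single P hS hPS ha0 hsa]; exact ENNReal.ofReal_ne_top))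
  rw [h1, aux_lintegral_single P hS hPS ha0 hsa, ENNReal.toReal_ofReal (tsum_nonneg ha0)]

lemma aux_product {Ω : Type*} [MeasurableSpace Ω] (P : Measure Ω) [IsProbabilityMeasure P]
    {S T : ℕ → Set Ω} (hS : ∀ k, MeasurableSet (S k)) (hT : ∀ k, MeasurableSet (T k))
    {a b w : ℕ → ℝ} (ha0 : ∀ k, 0 ≤ a k) (hb0 : ∀ k, 0 ≤ b k) (hw0 : ∀ k, 0 ≤ w k)
    (hsa : Summable a) (hsb : Summable b) (hsw : Summable w)
    (hST : ∀ j k, P (S j ∩ T k) = ENNReal.ofReal (a j * b k + if j = k then w j else 0))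
    {R R' : Ω → ℝ} (hR : ∀ ω, R ω = (∑' k, (S k).indicator (1 : Ω → ℝ≥0∞) ω).toReal)
    (hR' : ∀ ω, R' ω = (∑' k, (T k).indicator (1 : Ω → ℝ≥0∞) ω).toReal) :
    ∫ ω, R ω * R' ω ∂P = (∑' k, a k) * (∑' k, b k) + ∑' k, w k := by
  have hmF : Measurable fun ω => ∑' k, (S k).indicator (1 : Ω → ℝ≥0∞) ω :=
    Measurable.ennreal_tsum fun k => measurable_one.indicator (hS k)
  have hmG : Measurable fun ω => ∑' k, (T k).indicator (1 : Ω → ℝ≥0∞) ω :=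
    Measurable.ennreal_tsum fun k => measurable_one.indicator (hT k)
  have hlFG : ∫⁻ ω, (∑' j, (S j).indicator 1 ω) * (∑' k, (T k).indicator 1 ω) ∂P
      = ENNReal.ofReal ((∑' k, a k) * (∑' k, b k) + ∑' k, w k) := by
    rw [aux_lintegral_prod_indicator P hS hT, tsum_congr (fun j => tsum_congr (fun k => hST j k)),
      aux_double ha0 hb0 hw0 hsa hsb hsw]
  have h1 : ∫ ω, R ω * R' ω ∂P
      = (∫⁻ ω, (∑' j, (S j).indicator 1 ω) * (∑' k, (T k).indicator 1 ω) ∂P).toReal := by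
    rw [integral_congr_ae (Filter.EventuallyEq.of_eq (funext fun ω => ?_))]
    · exact integral_toReal (hmF.mul hmG).aemeasurable
        (ae_lt_top (hmF.mul hmG) (by rw [hlFG]; exact ENNReal.ofReal_ne_top))
    · rw [hR, hR', ENNReal.toReal_mul]
  rw [h1, hlFG, ENNReal.toReal_ofReal]
  have : 0 ≤ (∑' k, a k) * (∑' k, b k) := mul_nonneg (tsum_nonneg ha0) (tsum_nonneg hb0)
  have : 0 ≤ ∑' k, w k := tsum_nonneg hw0
  linarith

lemma aux_memLp {Ω : Type*} [MeasurableSpace Ω] (P : Measure Ω) [IsProbabilityMeasure P]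
    {S : ℕ → Set Ω} (hS : ∀ k, MeasurableSet (S k)) {a : ℕ → ℝ}
    (hPS : ∀ k, P (S k) = ENNReal.ofReal (a k)) (ha0 : ∀ k, 0 ≤ a k) (hsa : Summable a)
    (hoff : ∀ j k, j ≠ k → P (S j ∩ S k) = ENNReal.ofReal (a j * a k))
    {R : Ω → ℝ} (hR : ∀ ω, R ω = (∑' k, (S k).indicator (1 : Ω → ℝ≥0∞) ω).toReal) :
    MemLp R 2 P := by
  have hmF : Measurable fun ω => ∑' k, (S k).indicator (1 : Ω → ℝ≥0∞) ω :=
    Measurable.ennreal_tsum fun k => measurable_one.indicator (hS k)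
  have haesm : AEStronglyMeasurable R P := by
    rw [funext hR]
    exact hmF.ennreal_toReal.aestronglyMeasurable
  rw [memLp_two_iff_integrable_sq haesm]
  have hRsq : (fun ω => R ω ^ 2)
      = fun ω => ((∑' j, (S j).indicator (1 : Ω → ℝ≥0∞) ω)
        * (∑' k, (S k).indicator (1 : Ω → ℝ≥0∞) ω)).toReal := by
    funext ω; rw [hR, ENNReal.toReal_mul, sq]
  rw [hRsq]
  refine integrable_toReal_of_lintegral_ne_top (hmF.mul hmF).aemeasurable ?_
  rw [aux_lintegral_prod_indicator P hS hS]
  have hbound : ∀ j k : ℕ, P (S j ∩ S k)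
      ≤ ENNReal.ofReal (a j * a k + if j = k then a j else 0) := by
    intro j k
    by_cases hjk : j = k
    · subst hjk
      rw [Set.inter_self, hPS j, if_pos rfl]
      exact ENNReal.ofReal_le_ofReal (by nlinarith [ha0 j, sq_nonneg (a j)])
    · rw [hoff j k hjk, if_neg hjk, add_zero]
  refine ne_top_of_le_ne_top
    (ENNReal.ofReal_ne_top (r := (∑' k, a k) * (∑' k, a k) + ∑' k, a k)) ?_
  calc ∑' j, ∑' k, P (S j ∩ S k)
      ≤ ∑' j, ∑' k : ℕ, ENNReal.ofReal (a j * a k + if j = k then a j else 0) :=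
        ENNReal.tsum_le_tsum fun j => ENNReal.tsum_le_tsum fun k => hbound j k
    _ = ENNReal.ofReal ((∑' k, a k) * (∑' k, a k) + ∑' k, a k) :=
        aux_double ha0 ha0 ha0 hsa hsa hsa

/-- `Φ(x) = ∑_k (1 - e^{-p_k x})`, the expected number of non-empty urns in the
Poissonized model at time `x`. -/
def Phi (p : ℕ → ℝ) (x : ℝ) : ℝ := ∑' k : ℕ, (1 - Real.exp (-(p k * x)))

/-- covariance of the forward and backward numbers of non-empty urns in the
Poissonized Karlin model.  The urns are indexed by `k : ℕ`; for each `k`, `W (k,0)`,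
`W (k,1)`, `W (k,2)` are the Poisson numbers of balls in urn `k` thrown during the initial
segment of length `(1-τ)n`, the overlap of length `(t+τ-1)n`, and the final segment of
length `(1-t)n`; all these variables are mutually independent.  Then
`R = ∑_k 1(W(k,0) + W(k,1) ≥ 1)` and `R' = ∑_k 1(W(k,1) + W(k,2) ≥ 1)` are a.s. given by
convergent sums, are square integrable, and
`Cov(R, R') = ∑_k (e^{-p_k n} - e^{-p_k (t+τ) n}) = Φ((t+τ)n) - Φ(n)`. -/
theorem statement14
    {Ω : Type*} [MeasurableSpace Ω] (P : Measure Ω) [IsProbabilityMeasure P]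
    (p : ℕ → ℝ) (hp : ∀ k, 0 ≤ p k) (hsum : ∑' k : ℕ, p k = 1)
    (n : ℝ) (hn : 0 < n)
    (t τ : ℝ) (ht : t ∈ Set.Icc (0 : ℝ) 1) (hτ : τ ∈ Set.Icc (0 : ℝ) 1)
    (htτ : 1 < t + τ)
    (W : ℕ × Fin 3 → Ω → ℕ) (hmeas : ∀ i, Measurable (W i))
    (hindep : iIndepFun W P)
    (hX : ∀ k : ℕ, P.map (W (k, 0)) = poissonMeasure (Real.toNNReal (p k * (1 - τ) * n)))
    (hY : ∀ k : ℕ, P.map (W (k, 1)) = poissonMeasure (Real.toNNReal (p k * (t + τ - 1) * n)))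
    (hZ : ∀ k : ℕ, P.map (W (k, 2)) = poissonMeasure (Real.toNNReal (p k * (1 - t) * n)))
    (R R' : Ω → ℝ)
    (hR : R = fun ω => ∑' k : ℕ, if 1 ≤ W (k, 0) ω + W (k, 1) ω then (1 : ℝ) else 0)
    (hR' : R' = fun ω => ∑' k : ℕ, if 1 ≤ W (k, 1) ω + W (k, 2) ω then (1 : ℝ) else 0) :
    (∀ᵐ ω ∂P,
      Summable (fun k : ℕ => if 1 ≤ W (k, 0) ω + W (k, 1) ω then (1 : ℝ) else 0) ∧
      Summable (fun k : ℕ => if 1 ≤ W (k, 1) ω + W (k, 2) ω then (1 : ℝ) else 0)) ∧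
    MemLp R 2 P ∧ MemLp R' 2 P ∧
    (∫ ω, R ω * R' ω ∂P) - (∫ ω, R ω ∂P) * (∫ ω, R' ω ∂P) =
      ∑' k : ℕ, (Real.exp (-(p k * n)) - Real.exp (-(p k * (t + τ) * n))) ∧
    (∫ ω, R ω * R' ω ∂P) - (∫ ω, R ω ∂P) * (∫ ω, R' ω ∂P) =
      Phi p ((t + τ) * n) - Phi p n := by
  classical
  obtain ⟨ht0, ht1⟩ := ht
  obtain ⟨hτ0, hτ1⟩ := hτ
  have hn0 : (0:ℝ) ≤ n := hn.le
  have hsummable : Summable p := by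
    by_contra h
    rw [tsum_eq_zero_of_not_summable h] at hsum
    norm_num at hsum
  -- singleton probabilities
  have P0 : ∀ k, P (W (k,0) ⁻¹' {0}) = ENNReal.ofReal (rexp (-(p k * (1-τ) * n))) :=
    fun k => aux_map_zero P (hmeas _)
      (mul_nonneg (mul_nonneg (hp k) (by linarith)) hn0) (hX k)
  have P1 : ∀ k, P (W (k,1) ⁻¹' {0}) = ENNReal.ofReal (rexp (-(p k * (t+τ-1) * n))) :=
    fun k => aux_map_zero P (hmeas _)
      (mul_nonneg (mul_nonneg (hp k) (by linarith)) hn0) (hY k)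
  have P2 : ∀ k, P (W (k,2) ⁻¹' {0}) = ENNReal.ofReal (rexp (-(p k * (1-t) * n))) :=
    fun k => aux_map_zero P (hmeas _)
      (mul_nonneg (mul_nonneg (hp k) (by linarith)) hn0) (hZ k)
  have hprod : ∀ (s : Finset (ℕ × Fin 3)),
      P (⋂ i ∈ s, W i ⁻¹' {0}) = ∏ i ∈ s, P (W i ⁻¹' {0}) :=
    fun s => hindep.measure_inter_preimage_eq_mul s (sets := fun _ => ({0} : Set ℕ))
      (fun i _ => measurableSet_singleton 0)
  -- the sets
  set A : ℕ → Set Ω := fun k => W (k,0) ⁻¹' {0} ∩ W (k,1) ⁻¹' {0} with hA_def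
  set B : ℕ → Set Ω := fun k => W (k,1) ⁻¹' {0} ∩ W (k,2) ⁻¹' {0} with hB_def
  have mA : ∀ k, MeasurableSet (A k) := fun k =>
    ((hmeas (k,0)) (measurableSet_singleton 0)).inter ((hmeas (k,1)) (measurableSet_singleton 0))
  have mB : ∀ k, MeasurableSet (B k) := fun k =>
    ((hmeas (k,1)) (measurableSet_singleton 0)).inter ((hmeas (k,2)) (measurableSet_singleton 0))
  have hpair : ∀ (m : ℕ) (x y : Fin 3), W (m,x) ⁻¹' {0} ∩ W (m,y) ⁻¹' {0}
      = ⋂ i ∈ ({(m,x),(m,y)} : Finset (ℕ × Fin 3)), W i ⁻¹' {0} := by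
    intro m x y; ext ω; by_cases h : x = y <;> simp [h]
  have hAeq : ∀ k, A k = ⋂ i ∈ ({(k,0),(k,1)} : Finset (ℕ × Fin 3)), W i ⁻¹' {0} :=
    fun k => hpair k 0 1
  have hBeq : ∀ k, B k = ⋂ i ∈ ({(k,1),(k,2)} : Finset (ℕ × Fin 3)), W i ⁻¹' {0} :=
    fun k => hpair k 1 2
  -- probability of A k
  have hPA : ∀ k, P (A k) = ENNReal.ofReal (rexp (-(p k * t * n))) := by
    intro k
    rw [hAeq k, hprod, Finset.prod_insert (by simp), Finset.prod_singleton,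
      P0 k, P1 k, aux_ofReal_exp_mul,
      show p k * (1-τ) * n + p k * (t+τ-1) * n = p k * t * n by ring]
  have hPB : ∀ k, P (B k) = ENNReal.ofReal (rexp (-(p k * τ * n))) := by
    intro k
    rw [hBeq k, hprod, Finset.prod_insert (by simp), Finset.prod_singleton,
      P1 k, P2 k, aux_ofReal_exp_mul,
      show p k * (t+τ-1) * n + p k * (1-t) * n = p k * τ * n by ring]
  -- diagonal: all three zero
  have hPABd : ∀ k, P (A k ∩ B k) = ENNReal.ofReal (rexp (-(p k * n))) := by
    intro k
    have hs : A k ∩ B k = ⋂ i ∈ ({(k,0),(k,1),(k,2)} : Finset (ℕ × Fin 3)), W i ⁻¹' {0} := by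
      ext ω; simp [hA_def, hB_def]; tauto
    rw [hs, hprod, Finset.prod_insert (by simp), Finset.prod_insert (by simp),
      Finset.prod_singleton, P0 k, P1 k, P2 k, aux_ofReal_exp_mul, aux_ofReal_exp_mul,
      show p k * (1-τ) * n + (p k * (t+τ-1) * n + p k * (1-t) * n) = p k * n by ring]
  -- off-diagonal independence of pair-sets
  have hoffgen : ∀ (x y x' y' : Fin 3) (j k : ℕ), j ≠ k →
      P ((W (j,x) ⁻¹' {0} ∩ W (j,y) ⁻¹' {0}) ∩ (W (k,x') ⁻¹' {0} ∩ W (k,y') ⁻¹' {0}))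
      = P (W (j,x) ⁻¹' {0} ∩ W (j,y) ⁻¹' {0}) * P (W (k,x') ⁻¹' {0} ∩ W (k,y') ⁻¹' {0}) := by
    intro x y x' y' j k hjk
    have hdisj : Disjoint ({(j,x),(j,y)} : Finset (ℕ × Fin 3)) {(k,x'),(k,y')} := by
      simp only [Finset.disjoint_left, Finset.mem_insert, Finset.mem_singleton, Prod.ext_iff,
        Prod.forall]
      rintro a b (⟨rfl, -⟩ | ⟨rfl, -⟩) (⟨h, -⟩ | ⟨h, -⟩) <;> exact hjk h
    rw [hpair j x y, hpair k x' y', ← Finset.set_biInter_inter, hprod,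
      Finset.prod_union hdisj, ← hprod, ← hprod]
  -- real-valued quantities
  set a' : ℕ → ℝ := fun k => 1 - rexp (-(p k * t * n)) with ha'_def
  set b' : ℕ → ℝ := fun k => 1 - rexp (-(p k * τ * n)) with hb'_def
  set d : ℕ → ℝ := fun k => rexp (-(p k * n)) - rexp (-(p k * (t+τ) * n)) with hd_def
  have ha'0 : ∀ k, 0 ≤ a' k := fun k =>
    aux_one_sub_exp_nonneg (mul_nonneg (mul_nonneg (hp k) ht0) hn0)
  have hb'0 : ∀ k, 0 ≤ b' k := fun k =>
    aux_one_sub_exp_nonneg (mul_nonneg (mul_nonneg (hp k) hτ0) hn0)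
  have hd0 : ∀ k, 0 ≤ d k := by
    intro k
    have h1 : p k * n ≤ p k * (t+τ) * n := by
      nlinarith [mul_nonneg (mul_nonneg (hp k) hn0) (by linarith : (0:ℝ) ≤ t + τ - 1)]
    have h2 := Real.exp_le_exp.mpr (neg_le_neg h1)
    simp only [hd_def]; linarith
  have hsa : Summable a' := by
    refine Summable.of_nonneg_of_le ha'0 (fun k => ?_) (hsummable.mul_right (t*n))
    calc a' k ≤ p k * t * n := aux_one_sub_exp_le _
      _ = p k * (t*n) := by ring
  have hsb : Summable b' := by
    refine Summable.of_nonneg_of_le hb'0 (fun k => ?_) (hsummable.mul_right (τ*n))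
    calc b' k ≤ p k * τ * n := aux_one_sub_exp_le _
      _ = p k * (τ*n) := by ring
  have hsd : Summable d := by
    refine Summable.of_nonneg_of_le hd0 (fun k => ?_) (hsummable.mul_right ((t+τ)*n))
    have h1 : rexp (-(p k * n)) ≤ 1 := by
      rw [← Real.exp_zero]
      exact Real.exp_le_exp.mpr (neg_nonpos.mpr (mul_nonneg (hp k) hn0))
    have h2 := aux_one_sub_exp_le (p k * (t+τ) * n)
    simp only [hd_def]
    calc rexp (-(p k * n)) - rexp (-(p k * (t+τ) * n))
        ≤ 1 - rexp (-(p k * (t+τ) * n)) := by linarith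
      _ ≤ p k * (t+τ) * n := h2
      _ = p k * ((t+τ)*n) := by ring
  -- complement measures
  have hPS : ∀ k, P ((A k)ᶜ) = ENNReal.ofReal (a' k) := by
    intro k
    rw [measure_compl (mA k) (measure_ne_top _ _), measure_univ, hPA k]
    simp only [ha'_def]
    rw [ENNReal.ofReal_sub _ (exp_nonneg _), ENNReal.ofReal_one]
  have hPT : ∀ k, P ((B k)ᶜ) = ENNReal.ofReal (b' k) := by
    intro k
    rw [measure_compl (mB k) (measure_ne_top _ _), measure_univ, hPB k]
    simp only [hb'_def]
    rw [ENNReal.ofReal_sub _ (exp_nonneg _), ENNReal.ofReal_one]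
  -- the joint measures
  have hST : ∀ j k, P ((A j)ᶜ ∩ (B k)ᶜ)
      = ENNReal.ofReal (a' j * b' k + if j = k then d j else 0) := by
    intro j k
    by_cases hjk : j = k
    · subst hjk
      rw [aux_inclexcl' P (mA j) (mB j) (hPA j) (hPB j) (hPABd j)
        (exp_nonneg _) (exp_nonneg _) (exp_nonneg _), if_pos rfl]
      congr 1
      have hmul : rexp (-(p j * t * n)) * rexp (-(p j * τ * n))
          = rexp (-(p j * (t+τ) * n)) := by
        rw [← Real.exp_add]; congr 1; ring
      simp only [ha'_def, hb'_def, hd_def]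
      nlinarith [hmul]
    · have hz : P (A j ∩ B k)
          = ENNReal.ofReal (rexp (-(p j * t * n)) * rexp (-(p k * τ * n))) := by
        rw [(hoffgen 0 1 1 2 j k hjk : P (A j ∩ B k) = P (A j) * P (B k)), hPA j, hPB k,
          ← ENNReal.ofReal_mul (exp_nonneg _)]
      rw [aux_inclexcl' P (mA j) (mB k) (hPA j) (hPB k) hz
        (exp_nonneg _) (exp_nonneg _) (mul_nonneg (exp_nonneg _) (exp_nonneg _)), if_neg hjk]
      congr 1
      simp only [ha'_def, hb'_def]
      ring
  have hoffA : ∀ j k, j ≠ k → P ((A j)ᶜ ∩ (A k)ᶜ) = ENNReal.ofReal (a' j * a' k) := by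
    intro j k hjk
    have hz : P (A j ∩ A k)
        = ENNReal.ofReal (rexp (-(p j * t * n)) * rexp (-(p k * t * n))) := by
      rw [(hoffgen 0 1 0 1 j k hjk : P (A j ∩ A k) = P (A j) * P (A k)), hPA j, hPA k,
        ← ENNReal.ofReal_mul (exp_nonneg _)]
    rw [aux_inclexcl' P (mA j) (mA k) (hPA j) (hPA k) hz (exp_nonneg _) (exp_nonneg _)
      (mul_nonneg (exp_nonneg _) (exp_nonneg _))]
    congr 1; simp only [ha'_def]; ring
  have hoffB : ∀ j k, j ≠ k → P ((B j)ᶜ ∩ (B k)ᶜ) = ENNReal.ofReal (b' j * b' k) := by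
    intro j k hjk
    have hz : P (B j ∩ B k)
        = ENNReal.ofReal (rexp (-(p j * τ * n)) * rexp (-(p k * τ * n))) := by
      rw [(hoffgen 1 2 1 2 j k hjk : P (B j ∩ B k) = P (B j) * P (B k)), hPB j, hPB k,
        ← ENNReal.ofReal_mul (exp_nonneg _)]
    rw [aux_inclexcl' P (mB j) (mB k) (hPB j) (hPB k) hz (exp_nonneg _) (exp_nonneg _)
      (mul_nonneg (exp_nonneg _) (exp_nonneg _))]
    congr 1; simp only [hb'_def]; ring
  -- pointwise identification of the indicators
  have hmemA : ∀ (k : ℕ) (ω : Ω), (((A k)ᶜ).indicator (1 : Ω → ℝ≥0∞) ω).toReal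
      = (if 1 ≤ W (k,0) ω + W (k,1) ω then (1:ℝ) else 0) := by
    intro k ω
    have hmem : ω ∈ (A k)ᶜ ↔ 1 ≤ W (k,0) ω + W (k,1) ω := by
      simp only [hA_def, Set.mem_compl_iff, Set.mem_inter_iff, Set.mem_preimage,
        Set.mem_singleton_iff]
      omega
    rw [Set.indicator_apply, if_congr hmem rfl rfl]
    split <;> simp
  have hmemB : ∀ (k : ℕ) (ω : Ω), (((B k)ᶜ).indicator (1 : Ω → ℝ≥0∞) ω).toReal
      = (if 1 ≤ W (k,1) ω + W (k,2) ω then (1:ℝ) else 0) := by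
    intro k ω
    have hmem : ω ∈ (B k)ᶜ ↔ 1 ≤ W (k,1) ω + W (k,2) ω := by
      simp only [hB_def, Set.mem_compl_iff, Set.mem_inter_iff, Set.mem_preimage,
        Set.mem_singleton_iff]
      omega
    rw [Set.indicator_apply, if_congr hmem rfl rfl]
    split <;> simp
  have hRF : ∀ ω, R ω = (∑' k, ((A k)ᶜ).indicator (1 : Ω → ℝ≥0∞) ω).toReal := by
    intro ω
    rw [hR, ENNReal.tsum_toReal_eq (fun k => aux_ind_ne_top _ ω)]
    exact tsum_congr fun k => (hmemA k ω).symm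
  have hR'G : ∀ ω, R' ω = (∑' k, ((B k)ᶜ).indicator (1 : Ω → ℝ≥0∞) ω).toReal := by
    intro ω
    rw [hR', ENNReal.tsum_toReal_eq (fun k => aux_ind_ne_top _ ω)]
    exact tsum_congr fun k => (hmemB k ω).symm
  -- the integrals
  have hintR : ∫ ω, R ω ∂P = ∑' k, a' k :=
    aux_integral_single P (fun k => (mA k).compl) hPS ha'0 hsa hRF
  have hintR' : ∫ ω, R' ω ∂P = ∑' k, b' k :=
    aux_integral_single P (fun k => (mB k).compl) hPT hb'0 hsb hR'G
  have hintRR' : ∫ ω, R ω * R' ω ∂P = (∑' k, a' k) * (∑' k, b' k) + ∑' k, d k :=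
    aux_product P (fun k => (mA k).compl) (fun k => (mB k).compl)
      ha'0 hb'0 hd0 hsa hsb hsd hST hRF hR'G
  have hcov : (∫ ω, R ω * R' ω ∂P) - (∫ ω, R ω ∂P) * (∫ ω, R' ω ∂P) = ∑' k, d k := by
    rw [hintRR', hintR, hintR']; ring
  refine ⟨?_, ?_, ?_, ?_, ?_⟩
  · filter_upwards [aux_ae_summable P (fun k => (mA k).compl) hPS ha'0 hsa,
      aux_ae_summable P (fun k => (mB k).compl) hPT hb'0 hsb] with ω h1 h2
    exact ⟨h1.congr (fun k => hmemA k ω), h2.congr (fun k => hmemB k ω)⟩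
  · exact aux_memLp P (fun k => (mA k).compl) hPS ha'0 hsa hoffA hRF
  · exact aux_memLp P (fun k => (mB k).compl) hPT hb'0 hsb hoffB hR'G
  · rw [hcov]
  · rw [hcov]
    simp only [Phi]
    have hs1 : Summable (fun k => 1 - rexp (-(p k * ((t+τ) * n)))) := by
      refine Summable.of_nonneg_of_le
        (fun k => aux_one_sub_exp_nonneg
          (mul_nonneg (hp k) (mul_nonneg (by linarith) hn0)))
        (fun k => aux_one_sub_exp_le _) (hsummable.mul_right ((t+τ)*n))
    have hs2 : Summable (fun k => 1 - rexp (-(p k * n))) := by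
      refine Summable.of_nonneg_of_le
        (fun k => aux_one_sub_exp_nonneg (mul_nonneg (hp k) hn0))
        (fun k => aux_one_sub_exp_le _) (hsummable.mul_right n)
    rw [← Summable.tsum_sub hs1 hs2]
    refine tsum_congr fun k => ?_
    simp only [hd_def]
    rw [show p k * ((t+τ) * n) = p k * (t+τ) * n from (mul_assoc _ _ _).symm]
    ring
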